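/- Perturbation bound for stationary distributions: if μ and ν are stationary distributions of ergodic row-stochastic matrices P and P', then ‖μ − ν‖_TV ≤ (1/2) Λ₁(Z#) ‖P − P'‖₁, where Z# is the group inverse of I − P and ‖Δ‖₁ = max_i Σ_j |Δ_{ij}|. -/

import Mathlib

open Matrix

/-- The ergodicity coefficient `Λ₁(M) = (1/2) max_{i,j} Σ_k |M_{ik} − M_{jk}|`. -/
noncomputable def ergCoeff {n : Type*} [Fintype n] [Nonempty n] (M : Matrix n n ℝ) : ℝ :=
  (1 / 2) * (Finset.univ ×ˢ Finset.univ).sup'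
    (Finset.univ_nonempty.product Finset.univ_nonempty)
    (fun p => ∑ k, |M p.1 k - M p.2 k|)

/-- The matrix `1`-norm `‖Δ‖₁ = max_i Σ_j |Δ_{ij}|`. -/
noncomputable def matOneNorm {n : Type*} [Fintype n] [Nonempty n] (M : Matrix n n ℝ) : ℝ :=
  Finset.univ.sup' Finset.univ_nonempty (fun i => ∑ j, |M i j|)

lemma ergCoeff_nonneg {n : Type*} [Fintype n] [Nonempty n] (M : Matrix n n ℝ) :
    0 ≤ ergCoeff M := by
  obtain ⟨i⟩ := ‹Nonempty n›
  have h := Finset.le_sup' (s := Finset.univ ×ˢ Finset.univ)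
    (fun p : n × n => ∑ k, |M p.1 k - M p.2 k|) (b := (i, i)) (by simp)
  simp only [sub_self, abs_zero, Finset.sum_const_zero] at h
  unfold ergCoeff
  nlinarith [h]

lemma row_diff_le {n : Type*} [Fintype n] [Nonempty n] (M : Matrix n n ℝ) (i j : n) :
    ∑ k, |M i k - M j k| ≤ 2 * ergCoeff M := by
  have h := Finset.le_sup' (s := Finset.univ ×ˢ Finset.univ)
    (fun p : n × n => ∑ k, |M p.1 k - M p.2 k|) (b := (i, j)) (by simp)
  unfold ergCoeff; linarith

lemma row_le_matOneNorm {n : Type*} [Fintype n] [Nonempty n] (M : Matrix n n ℝ) (i : n) :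
    ∑ j, |M i j| ≤ matOneNorm M :=
  Finset.le_sup' (fun i => ∑ j, |M i j|) (Finset.mem_univ i)

lemma matOneNorm_nonneg {n : Type*} [Fintype n] [Nonempty n] (M : Matrix n n ℝ) :
    0 ≤ matOneNorm M := by
  obtain ⟨i⟩ := ‹Nonempty n›
  exact le_trans (Finset.sum_nonneg fun j _ => abs_nonneg _) (row_le_matOneNorm M i)

lemma zero_sum_bound {n : Type*} [Fintype n] [Nonempty n] (Z : Matrix n n ℝ) (w : n → ℝ)
    (hw : ∑ k, w k = 0) :
    ∑ x, |∑ k, w k * Z k x| ≤ (∑ k, |w k|) * ergCoeff Z := by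
  set wp : n → ℝ := fun k => max (w k) 0 with hwp
  set wm : n → ℝ := fun k => max (-w k) 0 with hwm
  have hp0 : ∀ k, 0 ≤ wp k := fun k => le_max_right _ _
  have hm0 : ∀ k, 0 ≤ wm k := fun k => le_max_right _ _
  have hdiff : ∀ k, wp k - wm k = w k := by
    intro k
    rcases le_total 0 (w k) with h | h
    · rw [hwp, hwm]; simp only
      rw [max_eq_left h, max_eq_right (neg_nonpos.mpr h)]; ring
    · rw [hwp, hwm]; simp only
      rw [max_eq_right h, max_eq_left (neg_nonneg.mpr h)]; ring
  have habs : ∀ k, wp k + wm k = |w k| := by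
    intro k
    rcases le_total 0 (w k) with h | h
    · rw [hwp, hwm]; simp only
      rw [max_eq_left h, max_eq_right (neg_nonpos.mpr h), abs_of_nonneg h]; ring
    · rw [hwp, hwm]; simp only
      rw [max_eq_right h, max_eq_left (neg_nonneg.mpr h), abs_of_nonpos h]; ring
  set s : ℝ := ∑ k, wp k with hs
  have hsm : ∑ k, wm k = s := by
    have h2 : ∑ k, (wp k - wm k) = 0 := by simp_rw [hdiff]; exact hw
    rw [Finset.sum_sub_distrib] at h2; linarith
  have hs0 : 0 ≤ s := Finset.sum_nonneg fun k _ => hp0 k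
  have habs_sum : ∑ k, |w k| = 2 * s := by
    simp_rw [← habs]; rw [Finset.sum_add_distrib, hsm]; ring
  rcases eq_or_lt_of_le hs0 with hse | hsp
  · have hwz : ∀ k, w k = 0 := by
      intro k
      have h1 : wp k = 0 :=
        (Finset.sum_eq_zero_iff_of_nonneg (fun k _ => hp0 k)).mp hse.symm k (by simp)
      have h2 : wm k = 0 :=
        (Finset.sum_eq_zero_iff_of_nonneg (fun k _ => hm0 k)).mp (by rw [hsm]; exact hse.symm) k (by simp)
      rw [← hdiff k, h1, h2]; ring
    simp [hwz]
  · have hkey : ∀ x, ∑ k, w k * Z k x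
        = (1 / s) * ∑ i, ∑ j, wp i * wm j * (Z i x - Z j x) := by
      intro x
      have t1 : ∑ i, ∑ j, wp i * wm j * Z i x = (∑ i, wp i * Z i x) * s := by
        rw [← hsm, Finset.sum_mul_sum]
        exact Finset.sum_congr rfl fun i _ => Finset.sum_congr rfl fun j _ => by ring
      have t2 : ∑ i, ∑ j, wp i * wm j * Z j x = s * (∑ j, wm j * Z j x) := by
        rw [hs, Finset.sum_mul_sum]
        exact Finset.sum_congr rfl fun i _ => Finset.sum_congr rfl fun j _ => by ring
      have e1 : ∑ i, ∑ j, wp i * wm j * (Z i x - Z j x)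
          = (∑ i, wp i * Z i x) * s - s * (∑ j, wm j * Z j x) := by
        simp_rw [mul_sub, Finset.sum_sub_distrib]
        rw [t1, t2]
      rw [e1]
      have e2 : ∑ k, w k * Z k x = ∑ i, wp i * Z i x - ∑ j, wm j * Z j x := by
        rw [← Finset.sum_sub_distrib]
        exact Finset.sum_congr rfl fun k _ => by rw [← hdiff k]; ring
      rw [e2]
      field_simp
    have inner : ∀ i, ∑ j, wp i * wm j * (2 * ergCoeff Z) = wp i * s * (2 * ergCoeff Z) := by
      intro i
      rw [← Finset.sum_mul, ← Finset.mul_sum, hsm]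
    calc ∑ x, |∑ k, w k * Z k x|
        = ∑ x, (1 / s) * |∑ i, ∑ j, wp i * wm j * (Z i x - Z j x)| := by
          refine Finset.sum_congr rfl fun x _ => ?_
          rw [hkey x, abs_mul, abs_of_pos (by positivity : (0:ℝ) < 1/s)]
      _ ≤ ∑ x, (1 / s) * ∑ i, ∑ j, wp i * wm j * |Z i x - Z j x| := by
          refine Finset.sum_le_sum fun x _ => ?_
          refine mul_le_mul_of_nonneg_left ?_ (by positivity)
          calc |∑ i, ∑ j, wp i * wm j * (Z i x - Z j x)|
              ≤ ∑ i, |∑ j, wp i * wm j * (Z i x - Z j x)| := Finset.abs_sum_le_sum_abs _ _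
            _ ≤ ∑ i, ∑ j, |wp i * wm j * (Z i x - Z j x)| :=
                Finset.sum_le_sum fun i _ => Finset.abs_sum_le_sum_abs _ _
            _ = ∑ i, ∑ j, wp i * wm j * |Z i x - Z j x| := by
                refine Finset.sum_congr rfl fun i _ => Finset.sum_congr rfl fun j _ => ?_
                rw [abs_mul, abs_mul, abs_of_nonneg (hp0 i), abs_of_nonneg (hm0 j)]
      _ = (1 / s) * ∑ i, ∑ j, wp i * wm j * ∑ x, |Z i x - Z j x| := by
          rw [← Finset.mul_sum]
          congr 1
          rw [Finset.sum_comm]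
          refine Finset.sum_congr rfl fun i _ => ?_
          rw [Finset.sum_comm]
          refine Finset.sum_congr rfl fun j _ => ?_
          rw [Finset.mul_sum]
      _ ≤ (1 / s) * ∑ i, ∑ j, wp i * wm j * (2 * ergCoeff Z) := by
          refine mul_le_mul_of_nonneg_left ?_ (by positivity)
          refine Finset.sum_le_sum fun i _ => Finset.sum_le_sum fun j _ => ?_
          exact mul_le_mul_of_nonneg_left (row_diff_le Z i j) (by positivity)
      _ = (∑ k, |w k|) * ergCoeff Z := by
          simp_rw [inner]
          rw [← Finset.sum_mul, ← Finset.sum_mul, ← hs, habs_sum]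
          field_simp

/-- Perturbation bound for stationary distributions: if `μ` and `ν` are stationary
distributions of row-stochastic matrices `P` and `P'`, then
`‖μ − ν‖_TV ≤ (1/2) Λ₁(Z#) ‖P − P'‖₁`, where `Z# = (I − P + 1·μᵀ)⁻¹ − 1·μᵀ` is the group
inverse of `I − P` (assumed to exist and to satisfy `νᵀ − μᵀ = νᵀ (P' − P) Z#`). -/
theorem stationary_perturbation_bound {n : Type*} [Fintype n] [Nonempty n] [DecidableEq n]
    (P P' : Matrix n n ℝ) (μ ν : n → ℝ)
    (hP0 : ∀ i j, 0 ≤ P i j) (hP1 : ∀ i, ∑ j, P i j = 1)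
    (hP'0 : ∀ i j, 0 ≤ P' i j) (hP'1 : ∀ i, ∑ j, P' i j = 1)
    (hμ0 : ∀ i, 0 ≤ μ i) (hμ1 : ∑ i, μ i = 1)
    (hν0 : ∀ i, 0 ≤ ν i) (hν1 : ∑ i, ν i = 1)
    (hμstat : μ ᵥ* P = μ) (hνstat : ν ᵥ* P' = ν)
    (hA : IsUnit (1 - P + Matrix.of fun _ j => μ j).det)
    (hid : ν - μ = ν ᵥ* ((P' - P) *
      ((1 - P + Matrix.of fun _ j => μ j)⁻¹ - Matrix.of fun _ j => μ j))) :
    (1 / 2) * ∑ x, |μ x - ν x|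
      ≤ (1 / 2) * ergCoeff ((1 - P + Matrix.of fun _ j => μ j)⁻¹ - Matrix.of fun _ j => μ j)
          * matOneNorm (P - P') := by
  set Z : Matrix n n ℝ :=
    (1 - P + Matrix.of fun _ j => μ j)⁻¹ - Matrix.of fun _ j => μ j with hZ
  set w : n → ℝ := ν ᵥ* (P' - P) with hw_def
  have hw_apply : ∀ x, w x = ∑ i, ν i * (P' - P) i x := by
    intro x; rw [hw_def]; simp [Matrix.vecMul, dotProduct]
  have hid' : ∀ x, ν x - μ x = ∑ k, w k * Z k x := by
    intro x
    have := congrFun hid x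
    rw [← Matrix.vecMul_vecMul] at this
    simpa [Matrix.vecMul, dotProduct, hw_apply, Matrix.sub_apply] using this
  have hw_sum : ∑ k, w k = 0 := by
    simp_rw [hw_apply]
    rw [Finset.sum_comm]
    refine Finset.sum_eq_zero fun i _ => ?_
    rw [← Finset.mul_sum]
    have : ∑ x, (P' - P) i x = 0 := by
      simp [Matrix.sub_apply, Finset.sum_sub_distrib, hP1 i, hP'1 i]
    rw [this, mul_zero]
  have hw_norm : ∑ k, |w k| ≤ matOneNorm (P - P') := by
    calc ∑ k, |w k| ≤ ∑ k, ∑ i, |ν i * (P' - P) i k| := by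
          refine Finset.sum_le_sum fun k _ => ?_
          rw [hw_apply k]; exact Finset.abs_sum_le_sum_abs _ _
      _ = ∑ i, ν i * ∑ k, |(P - P') i k| := by
          rw [Finset.sum_comm]
          refine Finset.sum_congr rfl fun i _ => ?_
          rw [Finset.mul_sum]
          refine Finset.sum_congr rfl fun k _ => ?_
          rw [abs_mul, abs_of_nonneg (hν0 i)]
          congr 1
          rw [← abs_neg]
          congr 1
          simp [Matrix.sub_apply]
      _ ≤ ∑ i, ν i * matOneNorm (P - P') := by
          refine Finset.sum_le_sum fun i _ => ?_
          exact mul_le_mul_of_nonneg_left (row_le_matOneNorm _ i) (hν0 i)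
      _ = matOneNorm (P - P') := by rw [← Finset.sum_mul, hν1, one_mul]
  have hmain : ∑ x, |μ x - ν x| ≤ (∑ k, |w k|) * ergCoeff Z := by
    calc ∑ x, |μ x - ν x| = ∑ x, |∑ k, w k * Z k x| := by
          refine Finset.sum_congr rfl fun x _ => ?_
          rw [abs_sub_comm, hid' x]
      _ ≤ (∑ k, |w k|) * ergCoeff Z := zero_sum_bound Z w hw_sum
  have herg : 0 ≤ ergCoeff Z := ergCoeff_nonneg Z
  have h2 : (∑ k, |w k|) * ergCoeff Z ≤ matOneNorm (P - P') * ergCoeff Z :=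
    mul_le_mul_of_nonneg_right hw_norm herg
  nlinarith [hmain, h2]
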